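/- Let a ∈ ℂ[X] be a polynomial of degree at most 4 satisfying: λ⁴·conj(a(1/conj(λ))) = a(λ) for all λ ≠ 0; the coefficient of X⁴ in a has absolute value 1; λ^{−2}·a(λ) is a nonnegative real number for every λ with |λ| = 1; and a has a repeated root. Then a has degree exactly 4, a(0) ≠ 0, and exactly one of the following holds: (1) a = c·(X − λ₁)²·(X − λ₂)² for some c ∈ ℂ and λ₁, λ₂ ∈ ℂ with |λ₁| = |λ₂| = 1 (possibly λ₁ = λ₂); (2) a = c·(X − λ₁)²·(X − α)·(X − 1/conj(α)) for some c ∈ ℂ, λ₁ with |λ₁| = 1, and α with 0 < |α| < 1; (3) a = c·(X − α)²·(X − 1/conj(α))² for some c ∈ ℂ and α with 0 < |α| < 1. -/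

import Mathlib

open Polynomial Finset Filter Topology


lemma lemA (a : ℂ[X]) (hdeg : a.natDegree ≤ 4)
    (hreal : ∀ l : ℂ, l ≠ 0 →
      l ^ 4 * (starRingEnd ℂ) (a.eval ((starRingEnd ℂ) l)⁻¹) = a.eval l) :
    a.coeff 0 = (starRingEnd ℂ) (a.coeff 4) := by
  have hb : (∑ k ∈ Finset.range 5, C ((starRingEnd ℂ) (a.coeff (4 - k))) * X ^ k) = a := by
    apply Polynomial.eq_of_infinite_eval_eq
    apply Set.Infinite.mono (s := {x : ℂ | x ≠ 0})
    · intro x hx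
      have hx : x ≠ 0 := hx
      simp only [Set.mem_setOf_eq, eval_finset_sum, eval_mul, eval_C, eval_pow, eval_X]
      rw [← hreal x hx]
      rw [Polynomial.eval_eq_sum_range' (n := 5) (lt_of_le_of_lt hdeg (by norm_num))]
      rw [map_sum]
      rw [Finset.mul_sum]
      rw [← Finset.sum_range_reflect]
      apply Finset.sum_congr rfl
      intro j hj
      simp only [Finset.mem_range] at hj
      have hj4 : j ≤ 4 := by omega
      have h44 : 4 - (4 - j) = j := by omega
      rw [h44, map_mul, map_pow, map_inv₀, Complex.conj_conj]
      have hp : x ^ (4 - j) = x ^ 4 / x ^ j := by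
        rw [eq_div_iff (pow_ne_zero _ hx), ← pow_add]
        congr 1
        omega
      show (starRingEnd ℂ) (a.coeff j) * x ^ (5 - 1 - j) = _
      have h51 : 5 - 1 - j = 4 - j := by omega
      rw [h51, hp, inv_pow, div_eq_mul_inv]
      ring
    · apply Set.infinite_of_finite_compl
      simp [Set.compl_setOf]
  conv_lhs => rw [← hb]
  simp [Polynomial.finset_sum_coeff, coeff_C_mul, coeff_X_pow]


lemma lemB (a : ℂ[X])
    (hreal : ∀ l : ℂ, l ≠ 0 →
      l ^ 4 * (starRingEnd ℂ) (a.eval ((starRingEnd ℂ) l)⁻¹) = a.eval l)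
    (hcard : a.roots.card = 4) (h0 : a.eval 0 ≠ 0) :
    a.roots.map (fun w => ((starRingEnd ℂ) w)⁻¹) = a.roots := by
  have ha : a ≠ 0 := fun h => h0 (by simp [h])
  have hc : a.leadingCoeff ≠ 0 := leadingCoeff_ne_zero.mpr ha
  set c := a.leadingCoeff with hcdef
  set M := a.roots with hMdef
  have hM0 : ∀ r ∈ M, r ≠ 0 := by
    intro r hr h
    subst h
    exact h0 ((mem_roots ha).mp hr)
  have hsp : a = C c * (M.map fun r => X - C r).prod :=
    (IsAlgClosed.splits a).eq_prod_roots
  have hk : (starRingEnd ℂ) c * (M.map fun r => -(starRingEnd ℂ) r).prod ≠ 0 := by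
    apply mul_ne_zero (by simpa using hc)
    apply Multiset.prod_ne_zero
    intro hmem
    obtain ⟨r, hr, h⟩ := Multiset.mem_map.mp hmem
    exact hM0 r hr (by simpa using h)
  have key : C ((starRingEnd ℂ) c * (M.map fun r => -(starRingEnd ℂ) r).prod) *
      (((M.map fun w => ((starRingEnd ℂ) w)⁻¹)).map fun r => X - C r).prod = a := by
    apply Polynomial.eq_of_infinite_eval_eq
    apply Set.Infinite.mono (s := {x : ℂ | x ≠ 0})
    · intro x hx
      have hx : x ≠ 0 := hx
      show _ = a.eval x
      rw [← hreal x hx]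
      have heval : ∀ y : ℂ, a.eval y = c * (M.map fun r => y - r).prod := by
        intro y
        conv_lhs => rw [hsp]
        rw [eval_mul, eval_C, eval_multiset_prod, Multiset.map_map]
        simp [Function.comp]
      rw [heval]
      conv_rhs => rw [map_mul, map_multiset_prod, Multiset.map_map]
      rw [eval_mul, eval_C, eval_multiset_prod, Multiset.map_map, Multiset.map_map]
      have h4 : x ^ 4 = (M.map fun _ => x).prod := by
        rw [Multiset.map_const', Multiset.prod_replicate, hcard]
      rw [mul_assoc, ← Multiset.prod_map_mul, h4, mul_left_comm, ← Multiset.prod_map_mul]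
      congr 1
      congr 1
      apply Multiset.map_congr rfl
      intro r hr
      have hcr : (starRingEnd ℂ) r ≠ 0 := by simpa using hM0 r hr
      simp only [Function.comp_apply, eval_sub, eval_X, eval_C]
      simp only [map_sub, map_inv₀, Complex.conj_conj]
      field_simp
      ring
    · apply Set.infinite_of_finite_compl
      simp [Set.compl_setOf]
  conv_rhs => rw [hMdef, ← key]
  rw [roots_C_mul _ hk, roots_multiset_prod_X_sub_C]


lemma lemC (a : ℂ[X]) (ha : a ≠ 0)
    (hpos : ∀ l : ℂ, ‖l‖ = 1 →
      ∃ r : ℝ, 0 ≤ r ∧ a.eval l = (r : ℂ) * l ^ 2)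
    (z : ℂ) (hz : ‖z‖ = 1) : Even (rootMultiplicity z a) := by
  by_contra hodd
  rw [Nat.not_even_iff_odd] at hodd
  set m := rootMultiplicity z a with hm
  set g := a /ₘ (X - C z) ^ m with hg
  have hfac : (X - C z) ^ m * g = a := pow_mul_divByMonic_rootMultiplicity_eq a z
  have hgz : g.eval z ≠ 0 := eval_divByMonic_pow_rootMultiplicity_ne_zero z ha
  have hz0 : z ≠ 0 := by intro h; rw [h] at hz; simp at hz
  set lam : ℝ → ℂ := fun θ => z * Complex.exp (θ * Complex.I) with hlam
  have hlam_abs : ∀ θ : ℝ, ‖lam θ‖ = 1 := by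
    intro θ
    simp [hlam, map_mul, hz, Complex.norm_exp]
  have hlam_ne : ∀ θ : ℝ, lam θ ≠ 0 :=
    fun θ => mul_ne_zero hz0 (Complex.exp_ne_zero _)
  have hlam0 : lam 0 = z := by simp [hlam]
  set K : ℂ := z ^ m * Complex.I ^ m * g.eval z / z ^ 2 with hK
  have hKne : K ≠ 0 := div_ne_zero (mul_ne_zero (mul_ne_zero (pow_ne_zero _ hz0)
    (pow_ne_zero _ Complex.I_ne_zero)) hgz) (pow_ne_zero _ hz0)
  -- derivative of exp (θ I) at 0
  have hder : HasDerivAt (fun θ : ℝ => Complex.exp (θ * Complex.I)) Complex.I 0 := by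
    have h1 : HasDerivAt (fun w : ℂ => Complex.exp (w * Complex.I)) Complex.I 0 := by
      have := (Complex.hasDerivAt_exp (0 * Complex.I)).comp 0
        ((hasDerivAt_id (0 : ℂ)).mul_const Complex.I)
      simpa [Function.comp_def] using this
    exact_mod_cast h1.comp_ofReal (z := 0)
  have h1 : Tendsto (fun θ : ℝ => (Complex.exp (θ * Complex.I) - 1) / (θ : ℂ))
      (𝓝[≠] (0:ℝ)) (𝓝 Complex.I) := by
    have := hasDerivAt_iff_tendsto_slope.mp hder
    apply this.congr
    intro θ
    simp [slope_def_module, Complex.real_smul, Complex.ofReal_inv]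
    ring
  have hcontlam : Continuous lam :=
    continuous_const.mul (Complex.continuous_exp.comp
      (Complex.continuous_ofReal.mul continuous_const))
  have h2 : Tendsto (fun θ : ℝ => g.eval (lam θ)) (𝓝[≠] (0:ℝ)) (𝓝 (g.eval z)) := by
    have : Tendsto (fun θ : ℝ => g.eval (lam θ)) (𝓝 (0:ℝ)) (𝓝 (g.eval (lam 0))) :=
      ((g.continuous).comp hcontlam).tendsto 0
    rw [hlam0] at this
    exact this.mono_left nhdsWithin_le_nhds
  have h3 : Tendsto (fun θ : ℝ => (lam θ) ^ 2) (𝓝[≠] (0:ℝ)) (𝓝 (z ^ 2)) := by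
    have : Tendsto (fun θ : ℝ => (lam θ) ^ 2) (𝓝 (0:ℝ)) (𝓝 ((lam 0) ^ 2)) :=
      ((hcontlam.pow 2)).tendsto 0
    rw [hlam0] at this
    exact this.mono_left nhdsWithin_le_nhds
  have hF : Tendsto (fun θ : ℝ => z ^ m * ((Complex.exp (θ * Complex.I) - 1) / (θ:ℂ)) ^ m
      * g.eval (lam θ) / (lam θ) ^ 2) (𝓝[≠] (0:ℝ)) (𝓝 K) :=
    (((h1.pow m).const_mul (z ^ m)).mul h2).div h3 (pow_ne_zero _ hz0)
  -- the function is the real one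
  set F : ℝ → ℂ := fun θ => z ^ m * ((Complex.exp (θ * Complex.I) - 1) / (θ:ℂ)) ^ m
      * g.eval (lam θ) / (lam θ) ^ 2 with hFdef
  have haeval : ∀ θ : ℝ, a.eval (lam θ) = (z * (Complex.exp (θ * Complex.I) - 1)) ^ m
      * g.eval (lam θ) := by
    intro θ
    conv_lhs => rw [← hfac]
    rw [eval_mul, eval_pow, eval_sub, eval_X, eval_C]
    congr 2
    rw [hlam]
    ring
  choose rr hrr0 hrr using fun θ : ℝ => hpos (lam θ) (hlam_abs θ)
  have hFr : ∀ θ : ℝ, θ ≠ 0 → F θ = ((rr θ / θ ^ m : ℝ) : ℂ) := by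
    intro θ hθ
    have hθC : (θ : ℂ) ≠ 0 := Complex.ofReal_ne_zero.mpr hθ
    have hlne := hlam_ne θ
    have key : F θ * (θ:ℂ) ^ m = (rr θ : ℂ) := by
      have h5 : F θ * (θ:ℂ) ^ m
          = (z * (Complex.exp (θ * Complex.I) - 1)) ^ m * g.eval (lam θ) / (lam θ) ^ 2 := by
        simp only [hFdef]
        rw [div_pow, mul_pow]
        field_simp
        rw [← mul_pow]
        ring_nf
      rw [h5, ← haeval θ, hrr θ]
      field_simp
    have hcast : ((rr θ / θ ^ m : ℝ) : ℂ) = (rr θ : ℂ) / (θ:ℂ) ^ m := by push_cast; ring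
    rw [hcast, eq_div_iff (pow_ne_zero _ hθC)]
    exact key
  -- imaginary part of K is 0
  have hIm : Tendsto (fun θ : ℝ => (F θ).im) (𝓝[≠] (0:ℝ)) (𝓝 K.im) :=
    (Complex.continuous_im.tendsto K).comp hF
  have hImeq : (fun θ : ℝ => (F θ).im) =ᶠ[𝓝[≠] (0:ℝ)] (fun _ => (0:ℝ)) := by
    filter_upwards [self_mem_nhdsWithin] with θ hθ
    rw [hFr θ hθ, Complex.ofReal_im]
  have hKim : K.im = 0 := tendsto_nhds_unique (hIm.congr' hImeq) tendsto_const_nhds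
  -- real part
  have hRe : Tendsto (fun θ : ℝ => (F θ).re) (𝓝[≠] (0:ℝ)) (𝓝 K.re) :=
    (Complex.continuous_re.tendsto K).comp hF
  have hsub1 : 𝓝[>] (0:ℝ) ≤ 𝓝[≠] (0:ℝ) :=
    nhdsWithin_mono 0 (fun x hx => ne_of_gt hx)
  have hsub2 : 𝓝[<] (0:ℝ) ≤ 𝓝[≠] (0:ℝ) :=
    nhdsWithin_mono 0 (fun x hx => ne_of_lt hx)
  have hKre1 : 0 ≤ K.re := by
    apply ge_of_tendsto (hRe.mono_left hsub1)
    filter_upwards [self_mem_nhdsWithin] with θ hθ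
    have hθ' : (0:ℝ) < θ := hθ
    rw [hFr θ (ne_of_gt hθ'), Complex.ofReal_re]
    exact div_nonneg (hrr0 θ) (le_of_lt (pow_pos hθ' m))
  have hKre2 : K.re ≤ 0 := by
    apply le_of_tendsto (hRe.mono_left hsub2)
    filter_upwards [self_mem_nhdsWithin] with θ hθ
    have hθ' : θ < 0 := hθ
    rw [hFr θ (ne_of_lt hθ'), Complex.ofReal_re]
    exact div_nonpos_of_nonneg_of_nonpos (hrr0 θ) (le_of_lt (hodd.pow_neg hθ'))
  exact hKne (Complex.ext (le_antisymm hKre2 hKre1) hKim)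


lemma meq4 (M : Multiset ℂ) (hM : Multiset.card M = 4) (t : Multiset ℂ)
    (ht : Multiset.card t = 4) (h : ∀ x, t.count x ≤ M.count x) : M = t := by
  have hle : t ≤ M := Multiset.le_iff_count.mpr h
  exact (Multiset.eq_of_le_of_card_le hle (by omega)).symm

lemma count_zzwu {M : Multiset ℂ} {z w u : ℂ} (hzw : z ≠ w) (hzu : z ≠ u) (hwu : w ≠ u)
    (h2 : 2 ≤ M.count z) (h1 : 1 ≤ M.count w) (h1' : 1 ≤ M.count u) (x : ℂ) :
    Multiset.count x ({z, z, w, u} : Multiset ℂ) ≤ M.count x := by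
  by_cases hxz : x = z
  · subst hxz
    simp [Multiset.insert_eq_cons, Multiset.count_cons, Multiset.count_singleton, hzw, hzu]
    omega
  by_cases hxw : x = w
  · subst hxw
    simp [Multiset.insert_eq_cons, Multiset.count_cons, Multiset.count_singleton,
      Ne.symm hzw, hwu]
    omega
  by_cases hxu : x = u
  · subst hxu
    simp [Multiset.insert_eq_cons, Multiset.count_cons, Multiset.count_singleton,
      Ne.symm hzu, Ne.symm hwu]
    omega
  · simp [Multiset.insert_eq_cons, Multiset.count_cons, Multiset.count_singleton,
      hxz, hxw, hxu]

lemma count_zzww {M : Multiset ℂ} {z w : ℂ} (hzw : z ≠ w)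
    (h2 : 2 ≤ M.count z) (h2' : 2 ≤ M.count w) (x : ℂ) :
    Multiset.count x ({z, z, w, w} : Multiset ℂ) ≤ M.count x := by
  by_cases hxz : x = z
  · subst hxz
    simp [Multiset.insert_eq_cons, Multiset.count_cons, Multiset.count_singleton, hzw]
    omega
  by_cases hxw : x = w
  · subst hxw
    simp [Multiset.insert_eq_cons, Multiset.count_cons, Multiset.count_singleton, Ne.symm hzw]
    omega
  · simp [Multiset.insert_eq_cons, Multiset.count_cons, Multiset.count_singleton, hxz, hxw]

lemma count_zzzz {M : Multiset ℂ} {z : ℂ} (h4 : 4 ≤ M.count z) (x : ℂ) :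
    Multiset.count x ({z, z, z, z} : Multiset ℂ) ≤ M.count x := by
  by_cases hxz : x = z
  · subst hxz
    simpa [Multiset.insert_eq_cons, Multiset.count_cons, Multiset.count_singleton] using h4
  · simp [Multiset.insert_eq_cons, Multiset.count_cons, Multiset.count_singleton, hxz]

lemma prod4 (c x y u v : ℂ) :
    C c * ((({x, y, u, v} : Multiset ℂ)).map fun r => X - C r).prod
      = C c * (X - C x) * (X - C y) * (X - C u) * (X - C v) := by
  simp only [Multiset.insert_eq_cons, Multiset.map_cons, Multiset.map_singleton,
    Multiset.prod_cons, Multiset.prod_singleton]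
  ring


lemma cne (a : ℂ[X]) (ha4 : a.coeff 4 ≠ 0) (c : ℂ) (q : ℂ[X]) (h : a = C c * q) :
    c ≠ 0 := by
  intro h0
  rw [h0] at h
  simp at h
  rw [h] at ha4
  simp at ha4

lemma exc12 (a : ℂ[X]) (ha4 : a.coeff 4 ≠ 0)
    (h1 : ∃ c l₁ l₂ : ℂ, ‖l₁‖ = 1 ∧ ‖l₂‖ = 1 ∧
        a = C c * (X - C l₁) ^ 2 * (X - C l₂) ^ 2)
    (h2 : ∃ c l₁ α : ℂ, ‖l₁‖ = 1 ∧
        0 < ‖α‖ ∧ ‖α‖ < 1 ∧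
        a = C c * (X - C l₁) ^ 2 * (X - C α) * (X - C ((starRingEnd ℂ) α)⁻¹)) : False := by
  obtain ⟨c, l₁, l₂, hl₁, hl₂, hfa⟩ := h1
  obtain ⟨c', l, α, hl, hα0, hα1, hfb⟩ := h2
  have hc : c ≠ 0 := cne a ha4 c ((X - C l₁) ^ 2 * (X - C l₂) ^ 2) (by rw [hfa]; ring)
  have hev : a.eval α = 0 := by rw [hfb]; simp
  rw [hfa] at hev
  simp only [eval_mul, eval_pow, eval_sub, eval_X, eval_C, mul_eq_zero,
    sq_eq_zero_iff, sub_eq_zero] at hev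
  rcases hev with (hh | hh) | hh
  · exact hc hh
  · rw [hh, hl₁] at hα1; exact lt_irrefl _ hα1
  · rw [hh, hl₂] at hα1; exact lt_irrefl _ hα1

lemma exc13 (a : ℂ[X]) (ha4 : a.coeff 4 ≠ 0)
    (h1 : ∃ c l₁ l₂ : ℂ, ‖l₁‖ = 1 ∧ ‖l₂‖ = 1 ∧
        a = C c * (X - C l₁) ^ 2 * (X - C l₂) ^ 2)
    (h3 : ∃ c α : ℂ, 0 < ‖α‖ ∧ ‖α‖ < 1 ∧
        a = C c * (X - C α) ^ 2 * (X - C ((starRingEnd ℂ) α)⁻¹) ^ 2) : False := by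
  obtain ⟨c, l₁, l₂, hl₁, hl₂, hfa⟩ := h1
  obtain ⟨c', α, hα0, hα1, hfb⟩ := h3
  have hc : c ≠ 0 := cne a ha4 c ((X - C l₁) ^ 2 * (X - C l₂) ^ 2) (by rw [hfa]; ring)
  have hev : a.eval α = 0 := by rw [hfb]; simp
  rw [hfa] at hev
  simp only [eval_mul, eval_pow, eval_sub, eval_X, eval_C, mul_eq_zero,
    sq_eq_zero_iff, sub_eq_zero] at hev
  rcases hev with (hh | hh) | hh
  · exact hc hh
  · rw [hh, hl₁] at hα1; exact lt_irrefl _ hα1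
  · rw [hh, hl₂] at hα1; exact lt_irrefl _ hα1

lemma exc23 (a : ℂ[X]) (ha4 : a.coeff 4 ≠ 0)
    (h2 : ∃ c l₁ α : ℂ, ‖l₁‖ = 1 ∧
        0 < ‖α‖ ∧ ‖α‖ < 1 ∧
        a = C c * (X - C l₁) ^ 2 * (X - C α) * (X - C ((starRingEnd ℂ) α)⁻¹))
    (h3 : ∃ c α : ℂ, 0 < ‖α‖ ∧ ‖α‖ < 1 ∧
        a = C c * (X - C α) ^ 2 * (X - C ((starRingEnd ℂ) α)⁻¹) ^ 2) : False := by
  obtain ⟨c, l, β, hl, hβ0, hβ1, hfa⟩ := h2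
  obtain ⟨c', α, hα0, hα1, hfb⟩ := h3
  have hc' : c' ≠ 0 := cne a ha4 c' ((X - C α) ^ 2 * (X - C ((starRingEnd ℂ) α)⁻¹) ^ 2) (by rw [hfb]; ring)
  have hev : a.eval l = 0 := by rw [hfa]; simp
  rw [hfb] at hev
  simp only [eval_mul, eval_pow, eval_sub, eval_X, eval_C, mul_eq_zero,
    sq_eq_zero_iff, sub_eq_zero] at hev
  rcases hev with (hh | hh) | hh
  · exact hc' hh
  · rw [← hh, hl] at hα1; exact lt_irrefl _ hα1
  · have : ‖l‖ = (‖α‖)⁻¹ := by rw [hh, norm_inv, Complex.norm_conj]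
    rw [hl] at this
    rw [← inv_eq_one.mp this.symm] at hα1
    exact lt_irrefl _ hα1

/-- Trichotomy for degenerate elements of the closure of `𝓗²`: a polynomial of
degree at most 4 satisfying the reality condition, the normalisation, the
nonnegativity on the unit circle, and possessing a repeated root, has degree
exactly 4, does not vanish at 0, and is of exactly one of the three displayed
forms. -/
theorem stmt_15 (a : ℂ[X]) (hdeg : a.degree ≤ 4)
    (hreal : ∀ l : ℂ, l ≠ 0 →
      l ^ 4 * (starRingEnd ℂ) (a.eval ((starRingEnd ℂ) l)⁻¹) = a.eval l)
    (hnorm : ‖a.coeff 4‖ = 1)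
    (hpos : ∀ l : ℂ, ‖l‖ = 1 →
      ∃ r : ℝ, 0 ≤ r ∧ a.eval l = (r : ℂ) * l ^ 2)
    (hrep : ∃ z : ℂ, 2 ≤ rootMultiplicity z a) :
    a.degree = 4 ∧ a.eval 0 ≠ 0 ∧
    (let P1 : Prop := ∃ c l₁ l₂ : ℂ, ‖l₁‖ = 1 ∧ ‖l₂‖ = 1 ∧
        a = C c * (X - C l₁) ^ 2 * (X - C l₂) ^ 2
     let P2 : Prop := ∃ c l₁ α : ℂ, ‖l₁‖ = 1 ∧
        0 < ‖α‖ ∧ ‖α‖ < 1 ∧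
        a = C c * (X - C l₁) ^ 2 * (X - C α) * (X - C ((starRingEnd ℂ) α)⁻¹)
     let P3 : Prop := ∃ c α : ℂ, 0 < ‖α‖ ∧ ‖α‖ < 1 ∧
        a = C c * (X - C α) ^ 2 * (X - C ((starRingEnd ℂ) α)⁻¹) ^ 2
     (P1 ∧ ¬P2 ∧ ¬P3) ∨ (¬P1 ∧ P2 ∧ ¬P3) ∨ (¬P1 ∧ ¬P2 ∧ P3)) := by
  have ha4 : a.coeff 4 ≠ 0 := by
    intro h
    rw [h] at hnorm
    simp at hnorm
  have ha : a ≠ 0 := fun h => ha4 (by simp [h])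
  have hnat : a.natDegree ≤ 4 := natDegree_le_iff_degree_le.mpr hdeg
  have hdeg4 : a.degree = 4 := le_antisymm hdeg (le_degree_of_ne_zero ha4)
  have hnatdeg : a.natDegree = 4 := natDegree_eq_of_degree_eq_some hdeg4
  have h00 : a.eval 0 ≠ 0 := by
    rw [← coeff_zero_eq_eval_zero, lemA a hnat hreal]
    simpa using ha4
  refine ⟨hdeg4, h00, ?_⟩
  set M := a.roots with hM
  have hcard : Multiset.card M = 4 := by
    rw [hM, (splits_iff_card_roots).mp (IsAlgClosed.splits a), hnatdeg]
  have hsym : M.map (fun w => ((starRingEnd ℂ) w)⁻¹) = M := lemB a hreal hcard h00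
  have heven : ∀ w : ℂ, ‖w‖ = 1 → Even (M.count w) := by
    intro w hw
    rw [hM, count_roots]
    exact lemC a ha hpos w hw
  have hM0 : ∀ r ∈ M, r ≠ 0 := by
    intro r hr h
    subst h
    exact h00 ((mem_roots ha).mp hr)
  have hinj : Function.Injective (fun w : ℂ => ((starRingEnd ℂ) w)⁻¹) :=
    fun x y h => (starRingEnd ℂ).injective (inv_injective h)
  have hcs : ∀ w : ℂ, M.count ((starRingEnd ℂ) w)⁻¹ = M.count w := by
    intro w
    conv_lhs => rw [← hsym]
    exact Multiset.count_map_eq_count' _ _ hinj _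
  have hms : ∀ w ∈ M, ((starRingEnd ℂ) w)⁻¹ ∈ M := by
    intro w hw
    rw [← hsym]
    exact Multiset.mem_map_of_mem _ hw
  have hσσ : ∀ w : ℂ, w ≠ 0 → ((starRingEnd ℂ) ((starRingEnd ℂ) w)⁻¹)⁻¹ = w := by
    intro w hw
    rw [map_inv₀, Complex.conj_conj, inv_inv]
  have habsσ : ∀ w : ℂ, ‖((starRingEnd ℂ) w)⁻¹‖ = ‖w‖⁻¹ := by
    intro w
    rw [norm_inv, Complex.norm_conj]
  have hc : a.leadingCoeff ≠ 0 := leadingCoeff_ne_zero.mpr ha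
  have hsp : a = C a.leadingCoeff * (M.map fun r => X - C r).prod :=
    (IsAlgClosed.splits a).eq_prod_roots
  obtain ⟨z, hz2⟩ := hrep
  have hz2 : 2 ≤ M.count z := by rw [hM, count_roots]; exact hz2
  have hzM : z ∈ M := Multiset.count_pos.mp (by omega)
  have hz0 : z ≠ 0 := hM0 z hzM
  -- main trichotomy
  have main : (∃ c l₁ l₂ : ℂ, ‖l₁‖ = 1 ∧ ‖l₂‖ = 1 ∧
        a = C c * (X - C l₁) ^ 2 * (X - C l₂) ^ 2) ∨
      (∃ c l₁ α : ℂ, ‖l₁‖ = 1 ∧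
        0 < ‖α‖ ∧ ‖α‖ < 1 ∧
        a = C c * (X - C l₁) ^ 2 * (X - C α) * (X - C ((starRingEnd ℂ) α)⁻¹)) ∨
      (∃ c α : ℂ, 0 < ‖α‖ ∧ ‖α‖ < 1 ∧
        a = C c * (X - C α) ^ 2 * (X - C ((starRingEnd ℂ) α)⁻¹) ^ 2) := by
    by_cases hall : ∀ w ∈ M, ‖w‖ = 1
    · -- all roots on the circle : P1
      left
      have hz1 : ‖z‖ = 1 := hall z hzM
      have hevz : Even (M.count z) := heven z hz1
      have hle : M.count z ≤ 4 := hcard ▸ Multiset.count_le_card z M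
      have h24 : M.count z = 2 ∨ M.count z = 4 := by
        rw [Nat.even_iff] at hevz; omega
      rcases h24 with h2 | h4
      · -- count z = 2
        have h2le : ({z, z} : Multiset ℂ) ≤ M := by
          rw [Multiset.le_iff_count]
          intro x
          by_cases hx : x = z
          · subst hx; simp [Multiset.count_cons]; omega
          · simp [Multiset.count_cons, Multiset.count_singleton, hx]
        obtain ⟨N, hN⟩ := Multiset.le_iff_exists_add.mp h2le
        have hNcard : Multiset.card N = 2 := by
          have := hcard
          rw [hN] at this
          simp at this
          omega
        have hNne : N ≠ 0 := by
          intro h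
          rw [h] at hNcard
          simp at hNcard
        obtain ⟨w, hwN⟩ := Multiset.exists_mem_of_ne_zero hNne
        have hwM : w ∈ M := by rw [hN]; exact Multiset.mem_add.mpr (Or.inr hwN)
        have hzcount : M.count z = 2 + N.count z := by
          rw [hN]; simp [Multiset.count_cons]; omega
        have hzN : N.count z = 0 := by omega
        have hwz : w ≠ z := by
          intro h
          subst h
          exact absurd (Multiset.count_pos.mpr hwN) (by omega)
        have hw1 : ‖w‖ = 1 := hall w hwM
        have hwcount : M.count w = N.count w := by
          rw [hN]
          simp [Multiset.count_cons, Multiset.count_singleton, hwz]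
        have hwev : Even (M.count w) := heven w hw1
        have hwle : N.count w ≤ 2 := hNcard ▸ Multiset.count_le_card w N
        have hwpos : 0 < N.count w := Multiset.count_pos.mpr hwN
        have hw2 : 2 ≤ M.count w := by
          rw [Nat.even_iff] at hwev; omega
        have hMeq : M = {z, z, w, w} :=
          meq4 M hcard _ (by simp [Multiset.insert_eq_cons]) (count_zzww (Ne.symm hwz) hz2 hw2)
        refine ⟨a.leadingCoeff, z, w, hz1, hw1, ?_⟩
        conv_lhs => rw [hsp, hMeq, prod4]
        ring
      · -- count z = 4
        have hMeq : M = {z, z, z, z} :=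
          meq4 M hcard _ (by simp [Multiset.insert_eq_cons]) (count_zzzz (by omega))
        refine ⟨a.leadingCoeff, z, z, hz1, hz1, ?_⟩
        conv_lhs => rw [hsp, hMeq, prod4]
        ring
    · push_neg at hall
      obtain ⟨w, hwM, hw1⟩ := hall
      have hw0 : w ≠ 0 := hM0 w hwM
      have hwa0 : ‖w‖ ≠ 0 := by simpa using hw0
      have hσwM : ((starRingEnd ℂ) w)⁻¹ ∈ M := hms w hwM
      have hσw1 : ‖((starRingEnd ℂ) w)⁻¹‖ ≠ 1 := by
        rw [habsσ]
        intro h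
        exact hw1 (by rw [← inv_inv ‖w‖, h]; norm_num)
      have hwσw : w ≠ ((starRingEnd ℂ) w)⁻¹ := by
        intro h
        have heq : ‖w‖ = ‖w‖⁻¹ := by
          conv_lhs => rw [h]
          rw [habsσ]
        have h2 : ‖w‖ * ‖w‖ = 1 := by
          nth_rewrite 2 [heq]
          exact mul_inv_cancel₀ hwa0
        rcases mul_self_eq_one_iff.mp h2 with h3 | h3
        · exact hw1 h3
        · have := norm_nonneg w
          linarith
      by_cases hz1 : ‖z‖ = 1
      · -- P2
        right; left
        have hzw : z ≠ w := fun h => hw1 (h ▸ hz1)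
        have hzσw : z ≠ ((starRingEnd ℂ) w)⁻¹ := fun h => hσw1 (h ▸ hz1)
        have hMeq : M = {z, z, w, ((starRingEnd ℂ) w)⁻¹} :=
          meq4 M hcard _ (by simp [Multiset.insert_eq_cons]) (count_zzwu hzw hzσw hwσw hz2
            (Multiset.count_pos.mpr hwM) (Multiset.count_pos.mpr hσwM))
        rcases lt_or_gt_of_ne (fun h => hw1 h) with hlt | hgt
        · refine ⟨a.leadingCoeff, z, w, hz1, by positivity, hlt, ?_⟩
          conv_lhs => rw [hsp, hMeq, prod4]
          ring
        · refine ⟨a.leadingCoeff, z, ((starRingEnd ℂ) w)⁻¹, hz1, ?_, ?_, ?_⟩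
          · rw [habsσ]; positivity
          · rw [habsσ]
            exact inv_lt_one_of_one_lt₀ hgt
          · conv_lhs => rw [hsp, hMeq, prod4]
            rw [hσσ w hw0]
            ring
      · -- P3 : z itself off the circle
        right; right
        have hσzM : ((starRingEnd ℂ) z)⁻¹ ∈ M := hms z hzM
        have hσz2 : 2 ≤ M.count ((starRingEnd ℂ) z)⁻¹ := by rw [hcs z]; exact hz2
        have hzσz : z ≠ ((starRingEnd ℂ) z)⁻¹ := by
          intro h
          have hza0 : ‖z‖ ≠ 0 := by simpa using hz0
          have heq : ‖z‖ = (‖z‖)⁻¹ := by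
            conv_lhs => rw [h]
            rw [habsσ]
          have h2 : ‖z‖ * ‖z‖ = 1 := by
            nth_rewrite 2 [heq]
            exact mul_inv_cancel₀ hza0
          rcases mul_self_eq_one_iff.mp h2 with h3 | h3
          · exact hz1 h3
          · have := norm_nonneg z
            linarith
        have hMeq : M = {z, z, ((starRingEnd ℂ) z)⁻¹, ((starRingEnd ℂ) z)⁻¹} :=
          meq4 M hcard _ (by simp [Multiset.insert_eq_cons]) (count_zzww hzσz hz2 hσz2)
        have hza0 : ‖z‖ ≠ 0 := by simpa using hz0
        rcases lt_or_gt_of_ne (fun h => hz1 h) with hlt | hgt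
        · refine ⟨a.leadingCoeff, z, by positivity, hlt, ?_⟩
          conv_lhs => rw [hsp, hMeq, prod4]
          ring
        · refine ⟨a.leadingCoeff, ((starRingEnd ℂ) z)⁻¹, ?_, ?_, ?_⟩
          · rw [habsσ]; positivity
          · rw [habsσ]
            exact inv_lt_one_of_one_lt₀ hgt
          · conv_lhs => rw [hsp, hMeq, prod4]
            rw [hσσ z hz0]
            ring
  rcases main with h1 | h2 | h3
  · exact Or.inl ⟨h1, fun h2 => exc12 a ha4 h1 h2, fun h3 => exc13 a ha4 h1 h3⟩
  · exact Or.inr (Or.inl ⟨fun h1 => exc12 a ha4 h1 h2, h2, fun h3 => exc23 a ha4 h2 h3⟩)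
  · exact Or.inr (Or.inr ⟨fun h1 => exc13 a ha4 h1 h3, fun h2 => exc23 a ha4 h2 h3, h3⟩)
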